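/- Let T ≥ 1 and for i = 1, …, T let X_i ∈ ℝ^{n×d_x}, Y_i ∈ ℝ^{n×d_y}, E_i ∈ ℝ^{d_x×d_y} be real matrices, let ε ≥ 0, and let k, m be integers with 1 ≤ k < m ≤ min(d_x,d_y). Assume that for each i: ‖X_iᵀY_i − E_i‖ ≤ (1+ε)·σ_{m+1}(X_iᵀY_i). Then ‖Σ_{i=1}^T (X_iᵀY_i − E_i)‖ ≤ (1+ε)/(m−k)·( (Σ_{i=1}^T ‖X_i‖_F²)^{1/2}·(Σ_{i=1}^T ‖Y_i‖_F²)^{1/2} − ‖Σ_{i=1}^T X_iᵀY_i‖_k ). -/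

import Mathlib

open scoped BigOperators

/-- `sval M i` is the `i`-th (0-indexed, in nonincreasing order) singular value of the
real matrix `M`, i.e. the square root of the `i`-th largest eigenvalue of `MᵀM`,
with the convention that it is `0` out of range. -/
noncomputable def sval {p q : ℕ} (M : Matrix (Fin p) (Fin q) ℝ) : ℕ → ℝ := fun i =>
  if h : i < q then
    Real.sqrt ((Matrix.isHermitian_conjTranspose_mul_self M).eigenvalues
      ((Tuple.sort (Matrix.isHermitian_conjTranspose_mul_self M).eigenvalues) (Fin.rev ⟨i, h⟩)))
  else 0

/-- The spectral norm `‖M‖ = σ₁(M)`. -/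
noncomputable def specNorm {p q : ℕ} (M : Matrix (Fin p) (Fin q) ℝ) : ℝ := sval M 0

/-- The Ky Fan `k`-norm `‖M‖_k = σ₁(M) + ⋯ + σ_k(M)`. -/
noncomputable def kyFan {p q : ℕ} (M : Matrix (Fin p) (Fin q) ℝ) (k : ℕ) : ℝ :=
  ∑ i ∈ Finset.range k, sval M i

/-- The nuclear norm `‖M‖_* = Σᵢ σᵢ(M)`. -/
noncomputable def nucNorm {p q : ℕ} (M : Matrix (Fin p) (Fin q) ℝ) : ℝ :=
  kyFan M (min p q)

/-- The Frobenius norm `‖M‖_F`. -/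
noncomputable def froNorm {p q : ℕ} (M : Matrix (Fin p) (Fin q) ℝ) : ℝ :=
  Real.sqrt (∑ i, ∑ j, (M i j) ^ 2)

open Matrix

variable {p q : ℕ}

lemma sval_nonneg (A : Matrix (Fin p) (Fin q) ℝ) (i : ℕ) : 0 ≤ sval A i := by
  unfold sval
  split
  · exact Real.sqrt_nonneg _
  · exact le_refl 0

lemma sval_antitone (A : Matrix (Fin p) (Fin q) ℝ) {i j : ℕ} (hij : i ≤ j) :
    sval A j ≤ sval A i := by
  unfold sval
  by_cases hj : j < q
  · have hi : i < q := lt_of_le_of_lt hij hj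
    rw [dif_pos hj, dif_pos hi]
    apply Real.sqrt_le_sqrt
    apply Tuple.monotone_sort (Matrix.isHermitian_conjTranspose_mul_self A).eigenvalues
    rw [Fin.rev_le_rev]
    exact hij
  · rw [dif_neg hj]
    split
    · exact Real.sqrt_nonneg _
    · exact le_refl 0

lemma exists_eigvecs (A : Matrix (Fin p) (Fin q) ℝ) :
    ∃ w : Fin q → (Fin q → ℝ),
      (∀ i j : Fin q, w i ⬝ᵥ w j = if i = j then 1 else 0) ∧
      (∀ j : Fin q, (Aᵀ * A) *ᵥ w j = sval A (j : ℕ) ^ 2 • w j) ∧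
      (∀ x : Fin q → ℝ, x = ∑ t : Fin q, (x ⬝ᵥ w t) • w t) := by
  set hA := Matrix.isHermitian_conjTranspose_mul_self A with hhA
  refine ⟨fun j => ⇑(hA.eigenvectorBasis ((Tuple.sort hA.eigenvalues) j.rev)), ?_, ?_, ?_⟩
  · intro i j
    have horth := hA.eigenvectorBasis.orthonormal
    rw [orthonormal_iff_ite] at horth
    have h2 := horth ((Tuple.sort hA.eigenvalues) i.rev) ((Tuple.sort hA.eigenvalues) j.rev)
    have hcond : ((Tuple.sort hA.eigenvalues) i.rev = (Tuple.sort hA.eigenvalues) j.rev) ↔ (i = j) :=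
      ⟨fun h => Fin.rev_injective ((Tuple.sort hA.eigenvalues).injective h), fun h => by rw [h]⟩
    by_cases hij : i = j
    · rw [if_pos hij, if_pos (hcond.mpr hij)] at *
      rw [← h2]
      simp [PiLp.inner_apply, dotProduct]
      exact Finset.sum_congr rfl fun _ _ => mul_comm _ _
    · rw [if_neg hij, if_neg (fun hc => hij (hcond.mp hc))] at *
      rw [← h2]
      simp [PiLp.inner_apply, dotProduct]
      exact Finset.sum_congr rfl fun _ _ => mul_comm _ _
  · intro j
    have hmv := hA.mulVec_eigenvectorBasis ((Tuple.sort hA.eigenvalues) j.rev)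
    have heq : sval A (j : ℕ) ^ 2 = hA.eigenvalues ((Tuple.sort hA.eigenvalues) j.rev) := by
      unfold sval
      rw [dif_pos j.isLt]
      rw [Real.sq_sqrt (Matrix.eigenvalues_conjTranspose_mul_self_nonneg A _)]
    rw [heq]
    exact hmv
  · intro x
    have hrepr := hA.eigenvectorBasis.sum_repr' ((WithLp.equiv 2 (Fin q → ℝ)).symm x)
    have hswap : ∑ t : Fin q, (x ⬝ᵥ ⇑(hA.eigenvectorBasis ((Tuple.sort hA.eigenvalues) t.rev)))
          • ⇑(hA.eigenvectorBasis ((Tuple.sort hA.eigenvalues) t.rev))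
        = ∑ i : Fin q, (x ⬝ᵥ ⇑(hA.eigenvectorBasis i)) • ⇑(hA.eigenvectorBasis i) :=
      Fintype.sum_equiv (Fin.revPerm.trans (Tuple.sort hA.eigenvalues)) _ _ (fun t => rfl)
    rw [hswap]
    have h2 : ∀ i, (inner ℝ (hA.eigenvectorBasis i) ((WithLp.equiv 2 (Fin q → ℝ)).symm x) : ℝ)
        = x ⬝ᵥ ⇑(hA.eigenvectorBasis i) := by
      intro i
      rw [PiLp.inner_apply]
      simp [dotProduct, mul_comm]
    simp only [h2] at hrepr
    have h3 := congrArg (WithLp.ofLp (p := 2)) hrepr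
    simpa [WithLp.ofLp_sum, WithLp.ofLp_smul] using h3.symm


lemma dot_self_nonneg {r : ℕ} (x : Fin r → ℝ) : 0 ≤ x ⬝ᵥ x :=
  Finset.sum_nonneg fun i _ => mul_self_nonneg _

lemma dot_sum_right {r : ℕ} {ι : Type*} (S : Finset ι) (x : Fin r → ℝ) (f : ι → Fin r → ℝ) :
    x ⬝ᵥ (∑ j ∈ S, f j) = ∑ j ∈ S, x ⬝ᵥ f j := by
  simp only [dotProduct, Finset.sum_apply, Finset.mul_sum]
  exact Finset.sum_comm

lemma dot_sum_left {r : ℕ} {ι : Type*} (S : Finset ι) (x : Fin r → ℝ) (f : ι → Fin r → ℝ) :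
    (∑ j ∈ S, f j) ⬝ᵥ x = ∑ j ∈ S, f j ⬝ᵥ x := by
  rw [dotProduct_comm, dot_sum_right]
  simp [dotProduct_comm]

lemma bessel {r : ℕ} {ι : Type*} [DecidableEq ι] (S : Finset ι) (v : ι → (Fin r → ℝ))
    (hv : ∀ i ∈ S, ∀ j ∈ S, v i ⬝ᵥ v j = if i = j then 1 else 0)
    (x : Fin r → ℝ) : ∑ j ∈ S, (x ⬝ᵥ v j) ^ 2 ≤ x ⬝ᵥ x := by
  set s : Fin r → ℝ := ∑ j ∈ S, (x ⬝ᵥ v j) • v j with hs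
  have hxs : x ⬝ᵥ s = ∑ j ∈ S, (x ⬝ᵥ v j) ^ 2 := by
    rw [hs, dot_sum_right]
    refine Finset.sum_congr rfl fun j hj => ?_
    rw [dotProduct_smul, smul_eq_mul, sq]
  have hsx : s ⬝ᵥ x = ∑ j ∈ S, (x ⬝ᵥ v j) ^ 2 := by
    rw [dotProduct_comm]; exact hxs
  have hss : s ⬝ᵥ s = ∑ j ∈ S, (x ⬝ᵥ v j) ^ 2 := by
    rw [hs, dot_sum_left]
    refine Finset.sum_congr rfl fun i hi => ?_
    have hin : ∑ j ∈ S, v i ⬝ᵥ ((x ⬝ᵥ v j) • v j) = x ⬝ᵥ v i := by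
      have hterm : ∀ j ∈ S, v i ⬝ᵥ ((x ⬝ᵥ v j) • v j) = if i = j then x ⬝ᵥ v i else 0 := by
        intro j hj
        rw [dotProduct_smul, hv i hi j hj, smul_eq_mul]
        by_cases hij : i = j
        · subst hij; simp
        · simp [hij]
      rw [Finset.sum_congr rfl hterm, Finset.sum_ite_eq S i (fun _ => x ⬝ᵥ v i), if_pos hi]
    rw [smul_dotProduct, dot_sum_right, hin, smul_eq_mul, sq]
  have h0 : 0 ≤ (x - s) ⬝ᵥ (x - s) := dot_self_nonneg _
  rw [sub_dotProduct, dotProduct_sub, dotProduct_sub, hxs, hsx, hss] at h0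
  linarith

lemma sum_weighted_le (A : Matrix (Fin p) (Fin q) ℝ) (k : ℕ) (x : ℕ → ℝ)
    (hx0 : ∀ t, 0 ≤ x t) (hx1 : ∀ t, x t ≤ 1) (hxq : ∀ t, q ≤ t → x t = 0)
    (hxk : ∑ t ∈ Finset.range q, x t ≤ k) :
    ∑ t ∈ Finset.range q, sval A t * x t ≤ ∑ t ∈ Finset.range k, sval A t := by
  set N := max q k with hN
  set s := sval A k with hsdef
  have hs0 : 0 ≤ s := sval_nonneg A k
  have hsub : Finset.range q ⊆ Finset.range N := Finset.range_subset_range.mpr (le_max_left q k)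
  have hq1 : ∑ t ∈ Finset.range q, sval A t * x t = ∑ t ∈ Finset.range N, sval A t * x t := by
    apply Finset.sum_subset hsub
    intro t _ hnq
    rw [hxq t (by simpa using hnq), mul_zero]
  have hq2 : ∑ t ∈ Finset.range q, x t = ∑ t ∈ Finset.range N, x t := by
    apply Finset.sum_subset hsub
    intro t _ hnq
    exact hxq t (by simpa using hnq)
  have hsplit : ∑ t ∈ Finset.range N, sval A t * x t
      = ∑ t ∈ Finset.range k, sval A t * x t + ∑ t ∈ Finset.Ico k N, sval A t * x t := by
    simp only [Finset.range_eq_Ico]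
    exact (Finset.sum_Ico_consecutive _ (Nat.zero_le k) (le_max_right q k)).symm
  have hxsplit : ∑ t ∈ Finset.range N, x t
      = ∑ t ∈ Finset.range k, x t + ∑ t ∈ Finset.Ico k N, x t := by
    simp only [Finset.range_eq_Ico]
    exact (Finset.sum_Ico_consecutive _ (Nat.zero_le k) (le_max_right q k)).symm
  have h1 : ∑ t ∈ Finset.range k, sval A t * x t
      ≤ ∑ t ∈ Finset.range k, (sval A t + s * x t - s) := by
    apply Finset.sum_le_sum
    intro t ht
    have hts : s ≤ sval A t := sval_antitone A (le_of_lt (Finset.mem_range.mp ht))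
    nlinarith [hx1 t, hx0 t]
  have h2 : ∑ t ∈ Finset.Ico k N, sval A t * x t ≤ ∑ t ∈ Finset.Ico k N, s * x t := by
    apply Finset.sum_le_sum
    intro t ht
    have hts : sval A t ≤ s := sval_antitone A (Finset.mem_Ico.mp ht).1
    exact mul_le_mul_of_nonneg_right hts (hx0 t)
  have hexp : ∑ t ∈ Finset.range k, (sval A t + s * x t - s)
      = ∑ t ∈ Finset.range k, sval A t + s * ∑ t ∈ Finset.range k, x t - s * k := by
    rw [Finset.sum_sub_distrib, Finset.sum_add_distrib, ← Finset.mul_sum]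
    simp [Finset.sum_const, Finset.card_range]
    ring
  have h3 : ∑ t ∈ Finset.Ico k N, s * x t = s * ∑ t ∈ Finset.Ico k N, x t := by
    rw [Finset.mul_sum]
  have hfin : s * ∑ t ∈ Finset.range k, x t + s * ∑ t ∈ Finset.Ico k N, x t - s * k ≤ 0 := by
    have : s * (∑ t ∈ Finset.range k, x t + ∑ t ∈ Finset.Ico k N, x t) ≤ s * k := by
      apply mul_le_mul_of_nonneg_left _ hs0
      rw [← hxsplit, ← hq2]
      exact hxk
    linarith
  rw [hq1, hsplit]
  calc ∑ t ∈ Finset.range k, sval A t * x t + ∑ t ∈ Finset.Ico k N, sval A t * x t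
      ≤ (∑ t ∈ Finset.range k, sval A t + s * ∑ t ∈ Finset.range k, x t - s * k)
        + s * ∑ t ∈ Finset.Ico k N, x t := by
        rw [← hexp, ← h3]; exact add_le_add h1 h2
    _ ≤ ∑ t ∈ Finset.range k, sval A t := by linarith

lemma dot_mulVec_mulVec (A : Matrix (Fin p) (Fin q) ℝ) (x y : Fin q → ℝ) :
    (A *ᵥ x) ⬝ᵥ (A *ᵥ y) = x ⬝ᵥ ((Aᵀ * A) *ᵥ y) := by
  conv_rhs => rw [← Matrix.mulVec_mulVec, Matrix.dotProduct_mulVec, Matrix.vecMul_transpose]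

lemma sum_dot_le_kyFanSum {ι : Type*} [DecidableEq ι] (A : Matrix (Fin p) (Fin q) ℝ) (k : ℕ)
    (S : Finset ι) (hS : S.card ≤ k)
    (u : ι → Fin p → ℝ) (v : ι → Fin q → ℝ)
    (hu : ∀ i ∈ S, ∀ j ∈ S, u i ⬝ᵥ u j = if i = j then 1 else 0)
    (hv : ∀ i ∈ S, ∀ j ∈ S, v i ⬝ᵥ v j = if i = j then 1 else 0) :
    ∑ j ∈ S, u j ⬝ᵥ (A *ᵥ v j) ≤ ∑ t ∈ Finset.range k, sval A t := by
  obtain ⟨w, hw, hweig, hwexp⟩ := exists_eigvecs A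
  set σ : Fin q → ℝ := fun t => sval A (t : ℕ) with hσ
  have hσ0 : ∀ t, 0 ≤ σ t := fun t => sval_nonneg A t
  set a : Fin q → Fin p → ℝ := fun t => A *ᵥ w t with ha
  have hadot : ∀ t t' : Fin q, a t ⬝ᵥ a t' = σ t' ^ 2 * (if t = t' then 1 else 0) := by
    intro t t'
    show (A *ᵥ w t) ⬝ᵥ (A *ᵥ w t') = _
    rw [dot_mulVec_mulVec, hweig t', dotProduct_smul, smul_eq_mul, hw t t']
  have hazero : ∀ t, σ t = 0 → a t = 0 := by
    intro t ht
    rw [← dotProduct_self_eq_zero (v := a t), hadot t t, ht]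
    ring
  set b : Fin q → Fin p → ℝ := fun t => (σ t)⁻¹ • a t with hb
  have hbzero : ∀ t, σ t = 0 → b t = 0 := by
    intro t ht
    show (σ t)⁻¹ • a t = 0
    rw [hazero t ht, smul_zero]
  have hbdot : ∀ t t' : Fin q, b t ⬝ᵥ b t' =
      (if σ t = 0 then 0 else 1) * (if t = t' then 1 else 0) := by
    intro t t'
    show ((σ t)⁻¹ • a t) ⬝ᵥ ((σ t')⁻¹ • a t') = _
    rw [smul_dotProduct, dotProduct_smul, hadot t t', smul_eq_mul, smul_eq_mul]
    by_cases h1 : t = t'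
    · subst h1
      by_cases h2 : σ t = 0
      · simp [h2]
      · rw [if_neg h2, if_pos rfl]
        field_simp
    · simp [h1]
  have hab : ∀ (z : Fin p → ℝ) t, z ⬝ᵥ a t = σ t * (z ⬝ᵥ b t) := by
    intro z t
    by_cases h2 : σ t = 0
    · rw [h2, hazero t h2]; simp
    · show _ = σ t * (z ⬝ᵥ ((σ t)⁻¹ • a t))
      rw [dotProduct_smul, smul_eq_mul]
      field_simp
  have hexpand : ∀ j, u j ⬝ᵥ (A *ᵥ v j) = ∑ t : Fin q, σ t * ((v j ⬝ᵥ w t) * (u j ⬝ᵥ b t)) := by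
    intro j
    rw [Matrix.dotProduct_mulVec]
    have key : ∀ y : Fin q → ℝ, (u j ᵥ* A) ⬝ᵥ y
        = ∑ t : Fin q, (y ⬝ᵥ w t) * ((u j ᵥ* A) ⬝ᵥ w t) := by
      intro y
      conv_lhs => rw [hwexp y]
      rw [dot_sum_right]
      exact Finset.sum_congr rfl fun t _ => by rw [dotProduct_smul, smul_eq_mul]
    rw [key (v j)]
    refine Finset.sum_congr rfl fun t _ => ?_
    rw [← Matrix.dotProduct_mulVec]
    have : u j ⬝ᵥ (A *ᵥ w t) = u j ⬝ᵥ a t := rfl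
    rw [this, hab (u j) t]
    ring
  set c : Fin q → ℝ := fun t => ∑ j ∈ S, (v j ⬝ᵥ w t) * (u j ⬝ᵥ b t) with hc
  have htotal : ∑ j ∈ S, u j ⬝ᵥ (A *ᵥ v j) = ∑ t : Fin q, σ t * c t := by
    rw [Finset.sum_congr rfl fun j _ => hexpand j, Finset.sum_comm]
    exact Finset.sum_congr rfl fun t _ => by rw [Finset.mul_sum]
  set α : Fin q → ℝ := fun t => ∑ j ∈ S, (v j ⬝ᵥ w t) ^ 2 with hα
  set β : Fin q → ℝ := fun t => ∑ j ∈ S, (u j ⬝ᵥ b t) ^ 2 with hβ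
  have hα0 : ∀ t, 0 ≤ α t := fun t => Finset.sum_nonneg fun j _ => sq_nonneg _
  have hβ0 : ∀ t, 0 ≤ β t := fun t => Finset.sum_nonneg fun j _ => sq_nonneg _
  have hc2 : ∀ t, c t ^ 2 ≤ α t * β t := fun t =>
    Finset.sum_mul_sq_le_sq_mul_sq S _ _
  have hα1 : ∀ t, α t ≤ 1 := by
    intro t
    have := bessel S v hv (w t)
    have hww : w t ⬝ᵥ w t = 1 := by rw [hw t t]; simp
    calc α t = ∑ j ∈ S, (w t ⬝ᵥ v j) ^ 2 :=
          Finset.sum_congr rfl fun j _ => by rw [dotProduct_comm]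
      _ ≤ w t ⬝ᵥ w t := this
      _ = 1 := hww
  have hβ1 : ∀ t, β t ≤ 1 := by
    intro t
    have := bessel S u hu (b t)
    have hbb : b t ⬝ᵥ b t ≤ 1 := by
      rw [hbdot t t]
      by_cases h2 : σ t = 0 <;> simp [h2]
    calc β t = ∑ j ∈ S, (b t ⬝ᵥ u j) ^ 2 :=
          Finset.sum_congr rfl fun j _ => by rw [dotProduct_comm]
      _ ≤ b t ⬝ᵥ b t := this
      _ ≤ 1 := hbb
  have hsum_a : ∑ t : Fin q, α t ≤ (S.card : ℝ) := by
    have hswap : ∑ t : Fin q, α t = ∑ j ∈ S, ∑ t : Fin q, (v j ⬝ᵥ w t) ^ 2 := Finset.sum_comm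
    rw [hswap]
    calc ∑ j ∈ S, ∑ t : Fin q, (v j ⬝ᵥ w t) ^ 2
        ≤ ∑ j ∈ S, (1 : ℝ) := by
          apply Finset.sum_le_sum
          intro j hj
          have := bessel Finset.univ w (fun i _ j _ => hw i j) (v j)
          have hvv : v j ⬝ᵥ v j = 1 := by rw [hv j hj j hj]; simp
          calc ∑ t : Fin q, (v j ⬝ᵥ w t) ^ 2 ≤ v j ⬝ᵥ v j := this
            _ = 1 := hvv
      _ = (S.card : ℝ) := by simp
  have hsum_b : ∑ t : Fin q, β t ≤ (S.card : ℝ) := by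
    have hswap : ∑ t : Fin q, β t = ∑ j ∈ S, ∑ t : Fin q, (u j ⬝ᵥ b t) ^ 2 := Finset.sum_comm
    rw [hswap]
    calc ∑ j ∈ S, ∑ t : Fin q, (u j ⬝ᵥ b t) ^ 2
        ≤ ∑ j ∈ S, (1 : ℝ) := by
          apply Finset.sum_le_sum
          intro j hj
          have hT : ∀ i ∈ Finset.univ.filter (fun t : Fin q => ¬ σ t = 0),
              ∀ j ∈ Finset.univ.filter (fun t : Fin q => ¬ σ t = 0),
              b i ⬝ᵥ b j = if i = j then 1 else 0 := by
            intro i hi j' hj'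
            rw [Finset.mem_filter] at hi
            rw [hbdot i j', if_neg hi.2, one_mul]
          have hbess := bessel (Finset.univ.filter (fun t : Fin q => ¬ σ t = 0)) b hT (u j)
          have huu : u j ⬝ᵥ u j = 1 := by rw [hu j hj j hj]; simp
          have hfull : ∑ t : Fin q, (u j ⬝ᵥ b t) ^ 2
              = ∑ t ∈ Finset.univ.filter (fun t : Fin q => ¬ σ t = 0), (u j ⬝ᵥ b t) ^ 2 := by
            symm
            apply Finset.sum_subset (Finset.filter_subset _ _)
            intro t _ hnt
            rw [Finset.mem_filter] at hnt
            push_neg at hnt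
            have : σ t = 0 := by
              by_contra hcon
              exact hcon (hnt (Finset.mem_univ t))
            rw [hbzero t this]
            simp
          rw [hfull]
          calc _ ≤ u j ⬝ᵥ u j := hbess
            _ = 1 := huu
      _ = (S.card : ℝ) := by simp
  have hcabs1 : ∀ t, |c t| ≤ 1 := by
    intro t
    rw [← Real.sqrt_one, ← Real.sqrt_sq_eq_abs]
    apply Real.sqrt_le_sqrt
    calc c t ^ 2 ≤ α t * β t := hc2 t
      _ ≤ 1 * 1 := mul_le_mul (hα1 t) (hβ1 t) (hβ0 t) zero_le_one
      _ = 1 := by ring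
  have hcsum : ∑ t : Fin q, |c t| ≤ (k : ℝ) := by
    have h1 : ∀ t, |c t| ≤ Real.sqrt (α t) * Real.sqrt (β t) := by
      intro t
      rw [← Real.sqrt_sq_eq_abs, ← Real.sqrt_mul (hα0 t)]
      exact Real.sqrt_le_sqrt (hc2 t)
    calc ∑ t : Fin q, |c t| ≤ ∑ t : Fin q, Real.sqrt (α t) * Real.sqrt (β t) :=
          Finset.sum_le_sum fun t _ => h1 t
      _ ≤ Real.sqrt (∑ t : Fin q, α t) * Real.sqrt (∑ t : Fin q, β t) :=
          Real.sum_sqrt_mul_sqrt_le _ hα0 hβ0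
      _ ≤ Real.sqrt (S.card : ℝ) * Real.sqrt (S.card : ℝ) := by
          apply mul_le_mul (Real.sqrt_le_sqrt hsum_a) (Real.sqrt_le_sqrt hsum_b)
            (Real.sqrt_nonneg _) (Real.sqrt_nonneg _)
      _ = (S.card : ℝ) := Real.mul_self_sqrt (Nat.cast_nonneg _)
      _ ≤ (k : ℝ) := Nat.cast_le.mpr hS
  -- assemble via sum_weighted_le
  set x : ℕ → ℝ := fun t => if h : t < q then |c ⟨t, h⟩| else 0 with hx
  have hx0 : ∀ t, 0 ≤ x t := by
    intro t; rw [hx]; dsimp only; split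
    · exact abs_nonneg _
    · exact le_refl 0
  have hx1 : ∀ t, x t ≤ 1 := by
    intro t; rw [hx]; dsimp only; split
    · exact hcabs1 _
    · exact zero_le_one
  have hxq : ∀ t, q ≤ t → x t = 0 := by
    intro t ht; rw [hx]; dsimp only
    rw [dif_neg (by omega)]
  have hxk : ∑ t ∈ Finset.range q, x t ≤ (k : ℝ) := by
    have : ∑ t ∈ Finset.range q, x t = ∑ t : Fin q, |c t| := by
      rw [← Fin.sum_univ_eq_sum_range]
      refine Finset.sum_congr rfl fun t _ => ?_
      rw [hx]; dsimp only
      rw [dif_pos t.isLt]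
    rw [this]; exact hcsum
  have hmain := sum_weighted_le A k x hx0 hx1 hxq hxk
  rw [htotal]
  refine le_trans ?_ hmain
  have : ∑ t ∈ Finset.range q, sval A t * x t = ∑ t : Fin q, sval A (t : ℕ) * |c t| := by
    rw [← Fin.sum_univ_eq_sum_range]
    refine Finset.sum_congr rfl fun t _ => ?_
    rw [hx]; dsimp only
    rw [dif_pos t.isLt]
  rw [this]
  apply Finset.sum_le_sum
  intro t _
  exact mul_le_mul_of_nonneg_left (le_abs_self _) (hσ0 t)

lemma sval_out (A : Matrix (Fin p) (Fin q) ℝ) {i : ℕ} (h : q ≤ i) : sval A i = 0 :=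
  dif_neg (not_lt.mpr h)

lemma kyFan_achieved (A : Matrix (Fin p) (Fin q) ℝ) (k : ℕ) :
    ∃ (S : Finset (Fin q)) (u : Fin q → Fin p → ℝ) (v : Fin q → Fin q → ℝ),
      S.card ≤ k ∧
      (∀ i ∈ S, ∀ j ∈ S, u i ⬝ᵥ u j = if i = j then 1 else 0) ∧
      (∀ i ∈ S, ∀ j ∈ S, v i ⬝ᵥ v j = if i = j then 1 else 0) ∧
      ∑ t ∈ Finset.range k, sval A t = ∑ j ∈ S, u j ⬝ᵥ (A *ᵥ v j) := by
  obtain ⟨w, hw, hweig, hwexp⟩ := exists_eigvecs A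
  set σ : Fin q → ℝ := fun t => sval A (t : ℕ) with hσ
  have hσ0 : ∀ t, 0 ≤ σ t := fun t => sval_nonneg A t
  set a : Fin q → Fin p → ℝ := fun t => A *ᵥ w t with ha
  have hadot : ∀ t t' : Fin q, a t ⬝ᵥ a t' = σ t' ^ 2 * (if t = t' then 1 else 0) := by
    intro t t'
    show (A *ᵥ w t) ⬝ᵥ (A *ᵥ w t') = _
    rw [dot_mulVec_mulVec, hweig t', dotProduct_smul, smul_eq_mul, hw t t']
  set b : Fin q → Fin p → ℝ := fun t => (σ t)⁻¹ • a t with hb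
  have hbdot : ∀ t t' : Fin q, b t ⬝ᵥ b t' =
      (if σ t = 0 then 0 else 1) * (if t = t' then 1 else 0) := by
    intro t t'
    show ((σ t)⁻¹ • a t) ⬝ᵥ ((σ t')⁻¹ • a t') = _
    rw [smul_dotProduct, dotProduct_smul, hadot t t', smul_eq_mul, smul_eq_mul]
    by_cases h1 : t = t'
    · subst h1
      by_cases h2 : σ t = 0
      · simp [h2]
      · rw [if_neg h2, if_pos rfl]
        field_simp
    · simp [h1]
  set S : Finset (Fin q) := Finset.univ.filter (fun t : Fin q => (t : ℕ) < k ∧ σ t ≠ 0) with hS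
  refine ⟨S, b, w, ?_, ?_, ?_, ?_⟩
  · -- card
    have hinj : ∀ x ∈ S, ∀ y ∈ S, Fin.val x = Fin.val y → x = y :=
      fun x _ y _ h => Fin.val_injective h
    have hmaps : ∀ x ∈ S, Fin.val x ∈ Finset.range k := by
      intro x hx
      rw [hS, Finset.mem_filter] at hx
      exact Finset.mem_range.mpr hx.2.1
    have hcard := Finset.card_le_card_of_injOn Fin.val hmaps
      (fun x _ y _ h => Fin.val_injective h)
    rwa [Finset.card_range] at hcard
  · intro i hi j hj
    rw [hS, Finset.mem_filter] at hi
    rw [hbdot i j, if_neg hi.2.2, one_mul]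
  · intro i _ j _
    exact hw i j
  · -- sum equality
    have hterm : ∀ j ∈ S, b j ⬝ᵥ (A *ᵥ w j) = σ j := by
      intro j hj
      rw [hS, Finset.mem_filter] at hj
      show ((σ j)⁻¹ • a j) ⬝ᵥ a j = σ j
      rw [smul_dotProduct, hadot j j, if_pos rfl, smul_eq_mul]
      have := hj.2.2
      field_simp
    rw [Finset.sum_congr rfl hterm]
    -- now: ∑ t ∈ range k, sval A t = ∑ j ∈ S, σ j
    have h1 : ∑ j ∈ S, σ j = ∑ j ∈ Finset.univ.filter (fun t : Fin q => (t : ℕ) < k), σ j := by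
      apply Finset.sum_subset
      · intro x hx
        rw [hS, Finset.mem_filter] at hx
        rw [Finset.mem_filter]
        exact ⟨hx.1, hx.2.1⟩
      · intro x hx hnx
        rw [Finset.mem_filter] at hx
        rw [hS, Finset.mem_filter] at hnx
        push_neg at hnx
        exact not_not.mp (fun hne => hne (hnx (Finset.mem_univ x) hx.2))
    have h2 : ∑ j ∈ Finset.univ.filter (fun t : Fin q => (t : ℕ) < k), σ j
        = ∑ t ∈ (Finset.univ.filter (fun t : Fin q => (t : ℕ) < k)).image Fin.val, sval A t := by
      rw [Finset.sum_image (fun x _ y _ h => Fin.val_injective h)]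
    have h3 : (Finset.univ.filter (fun t : Fin q => (t : ℕ) < k)).image Fin.val
        = Finset.range (min k q) := by
      ext t
      simp only [Finset.mem_image, Finset.mem_filter, Finset.mem_univ, true_and,
        Finset.mem_range, lt_min_iff]
      constructor
      · rintro ⟨x, hx, rfl⟩
        exact ⟨hx, x.isLt⟩
      · rintro ⟨h1, h2⟩
        exact ⟨⟨t, h2⟩, h1, rfl⟩
    have h4 : ∑ t ∈ Finset.range (min k q), sval A t = ∑ t ∈ Finset.range k, sval A t := by
      apply Finset.sum_subset (Finset.range_subset_range.mpr (min_le_left k q))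
      intro t ht hnt
      rw [Finset.mem_range] at ht hnt
      apply sval_out
      omega
    rw [h1, h2, h3, h4]

lemma sum_matrix_mulVec {ι : Type*} (S : Finset ι) (M : ι → Matrix (Fin p) (Fin q) ℝ)
    (x : Fin q → ℝ) : (∑ i ∈ S, M i) *ᵥ x = ∑ i ∈ S, (M i *ᵥ x) := by
  funext r
  have h1 : (∑ i ∈ S, M i) r = ∑ i ∈ S, M i r := by
    change (∑ i ∈ S, M i) r = _
    funext c; simp [Matrix.sum_apply]
  show (∑ i ∈ S, M i) r ⬝ᵥ x = (∑ i ∈ S, M i *ᵥ x) r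
  rw [h1, dot_sum_left, Finset.sum_apply]
  rfl

lemma dot_transpose_mul {n : ℕ} (X : Matrix (Fin n) (Fin p) ℝ) (Y : Matrix (Fin n) (Fin q) ℝ)
    (u : Fin p → ℝ) (v : Fin q → ℝ) :
    u ⬝ᵥ ((Xᵀ * Y) *ᵥ v) = (X *ᵥ u) ⬝ᵥ (Y *ᵥ v) := by
  conv_lhs => rw [← Matrix.mulVec_mulVec, Matrix.dotProduct_mulVec, Matrix.vecMul_transpose]

lemma dot_le_sqrt {r : ℕ} (x y : Fin r → ℝ) :
    x ⬝ᵥ y ≤ Real.sqrt (x ⬝ᵥ x) * Real.sqrt (y ⬝ᵥ y) := by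
  have := Real.sum_mul_le_sqrt_mul_sqrt Finset.univ x y
  simpa [dotProduct, sq] using this

lemma sum_mulVec_dot_le {n r : ℕ} {ι : Type*} [DecidableEq ι] (X : Matrix (Fin n) (Fin r) ℝ)
    (S : Finset ι) (u : ι → Fin r → ℝ)
    (hu : ∀ i ∈ S, ∀ j ∈ S, u i ⬝ᵥ u j = if i = j then 1 else 0) :
    ∑ j ∈ S, (X *ᵥ u j) ⬝ᵥ (X *ᵥ u j) ≤ ∑ i, ∑ l, (X i l) ^ 2 := by
  have h1 : ∀ j, (X *ᵥ u j) ⬝ᵥ (X *ᵥ u j) = ∑ i, (X i ⬝ᵥ u j) ^ 2 := by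
    intro j
    show ∑ i, (X i ⬝ᵥ u j) * (X i ⬝ᵥ u j) = _
    exact Finset.sum_congr rfl fun i _ => (sq (X i ⬝ᵥ u j)).symm
  rw [Finset.sum_congr rfl fun j _ => h1 j, Finset.sum_comm]
  apply Finset.sum_le_sum
  intro i _
  have := bessel S u hu (X i)
  refine le_trans this ?_
  show X i ⬝ᵥ X i ≤ _
  rw [dotProduct]
  exact le_of_eq (Finset.sum_congr rfl fun l _ => (sq (X i l)).symm)

lemma kyFanSum_mul_le {n : ℕ} (X : Matrix (Fin n) (Fin p) ℝ) (Y : Matrix (Fin n) (Fin q) ℝ)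
    (r : ℕ) :
    ∑ t ∈ Finset.range r, sval (Xᵀ * Y) t ≤ froNorm X * froNorm Y := by
  obtain ⟨S, u, v, hcard, hu, hv, hsum⟩ := kyFan_achieved (Xᵀ * Y) r
  rw [hsum]
  calc ∑ j ∈ S, u j ⬝ᵥ ((Xᵀ * Y) *ᵥ v j)
      = ∑ j ∈ S, (X *ᵥ u j) ⬝ᵥ (Y *ᵥ v j) :=
        Finset.sum_congr rfl fun j _ => dot_transpose_mul X Y (u j) (v j)
    _ ≤ ∑ j ∈ S, Real.sqrt ((X *ᵥ u j) ⬝ᵥ (X *ᵥ u j)) * Real.sqrt ((Y *ᵥ v j) ⬝ᵥ (Y *ᵥ v j)) :=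
        Finset.sum_le_sum fun j _ => dot_le_sqrt _ _
    _ ≤ Real.sqrt (∑ j ∈ S, (X *ᵥ u j) ⬝ᵥ (X *ᵥ u j))
        * Real.sqrt (∑ j ∈ S, (Y *ᵥ v j) ⬝ᵥ (Y *ᵥ v j)) :=
        Real.sum_sqrt_mul_sqrt_le S (fun j => dot_self_nonneg _) (fun j => dot_self_nonneg _)
    _ ≤ froNorm X * froNorm Y := by
        unfold froNorm
        exact mul_le_mul (Real.sqrt_le_sqrt (sum_mulVec_dot_le X S u hu))
          (Real.sqrt_le_sqrt (sum_mulVec_dot_le Y S v hv)) (Real.sqrt_nonneg _)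
          (Real.sqrt_nonneg _)


/-- deterministic core of Lemma 8: blockwise `(1+ε)σ_{m+1}`
compression errors sum to the global compression bound. -/
theorem blockwise_compression_error
    {n dx dy T : ℕ} (hT : 1 ≤ T)
    (X : Fin T → Matrix (Fin n) (Fin dx) ℝ) (Y : Fin T → Matrix (Fin n) (Fin dy) ℝ)
    (E : Fin T → Matrix (Fin dx) (Fin dy) ℝ)
    (ε : ℝ) (hε : 0 ≤ ε) (k m : ℕ) (hk1 : 1 ≤ k) (hkm : k < m) (hm : m ≤ min dx dy)
    (h : ∀ i, specNorm ((X i)ᵀ * Y i - E i) ≤ (1 + ε) * sval ((X i)ᵀ * Y i) m) :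
    specNorm (∑ i, ((X i)ᵀ * Y i - E i)) ≤
      (1 + ε) / ((m : ℝ) - (k : ℝ)) *
        (Real.sqrt (∑ i, froNorm (X i) ^ 2) * Real.sqrt (∑ i, froNorm (Y i) ^ 2) -
          kyFan (∑ i, (X i)ᵀ * Y i) k) := by
  -- Step A: spectral norm subadditivity
  have hspec : specNorm (∑ i, ((X i)ᵀ * Y i - E i))
      ≤ ∑ i, specNorm ((X i)ᵀ * Y i - E i) := by
    obtain ⟨S, u, v, hcard, hu, hv, hsum⟩ :=
      kyFan_achieved (∑ i, ((X i)ᵀ * Y i - E i)) 1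
    have h0 : specNorm (∑ i, ((X i)ᵀ * Y i - E i))
        = ∑ t ∈ Finset.range 1, sval (∑ i, ((X i)ᵀ * Y i - E i)) t := by
      rw [Finset.sum_range_one]; rfl
    rw [h0, hsum]
    have hswap : ∑ j ∈ S, u j ⬝ᵥ ((∑ i, ((X i)ᵀ * Y i - E i)) *ᵥ v j)
        = ∑ i, ∑ j ∈ S, u j ⬝ᵥ (((X i)ᵀ * Y i - E i) *ᵥ v j) := by
      rw [Finset.sum_congr rfl
        (fun j _ => by rw [sum_matrix_mulVec, dot_sum_right]), Finset.sum_comm]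
    rw [hswap]
    apply Finset.sum_le_sum
    intro i _
    have := sum_dot_le_kyFanSum ((X i)ᵀ * Y i - E i) 1 S hcard u v hu hv
    rw [Finset.sum_range_one] at this
    exact this
  -- Step B: hypothesis per block
  have hB : ∑ i, specNorm ((X i)ᵀ * Y i - E i)
      ≤ (1 + ε) * ∑ i, sval ((X i)ᵀ * Y i) m := by
    rw [Finset.mul_sum]
    exact Finset.sum_le_sum fun i _ => h i
  -- Step C: key bound
  have hkey : kyFan (∑ i, (X i)ᵀ * Y i) k + ((m : ℝ) - k) * ∑ i, sval ((X i)ᵀ * Y i) m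
      ≤ Real.sqrt (∑ i, froNorm (X i) ^ 2) * Real.sqrt (∑ i, froNorm (Y i) ^ 2) := by
    obtain ⟨S, u, v, hcard, hu, hv, hsum⟩ := kyFan_achieved (∑ i, (X i)ᵀ * Y i) k
    have h1 : kyFan (∑ i, (X i)ᵀ * Y i) k
        ≤ ∑ i, ∑ t ∈ Finset.range k, sval ((X i)ᵀ * Y i) t := by
      have hky : kyFan (∑ i, (X i)ᵀ * Y i) k
          = ∑ t ∈ Finset.range k, sval (∑ i, (X i)ᵀ * Y i) t := rfl
      rw [hky, hsum]
      have hswap : ∑ j ∈ S, u j ⬝ᵥ ((∑ i, (X i)ᵀ * Y i) *ᵥ v j)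
          = ∑ i, ∑ j ∈ S, u j ⬝ᵥ (((X i)ᵀ * Y i) *ᵥ v j) := by
        rw [Finset.sum_congr rfl
          (fun j _ => by rw [sum_matrix_mulVec, dot_sum_right]), Finset.sum_comm]
      rw [hswap]
      exact Finset.sum_le_sum fun i _ =>
        sum_dot_le_kyFanSum ((X i)ᵀ * Y i) k S hcard u v hu hv
    have h2 : ∀ i, ((m : ℝ) - k) * sval ((X i)ᵀ * Y i) m
        ≤ ∑ t ∈ Finset.Ico k m, sval ((X i)ᵀ * Y i) t := by
      intro i
      have hle : ∀ t ∈ Finset.Ico k m, sval ((X i)ᵀ * Y i) m ≤ sval ((X i)ᵀ * Y i) t :=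
        fun t ht => sval_antitone _ (le_of_lt (Finset.mem_Ico.mp ht).2)
      have := Finset.card_nsmul_le_sum (Finset.Ico k m) _ _ hle
      rw [Nat.card_Ico, nsmul_eq_mul] at this
      refine le_trans (le_of_eq ?_) this
      congr 1
      have : (k : ℝ) ≤ (m : ℝ) := Nat.cast_le.mpr (le_of_lt hkm)
      push_cast [Nat.cast_sub (le_of_lt hkm)]
      ring
    have h3 : ∀ i, ∑ t ∈ Finset.range k, sval ((X i)ᵀ * Y i) t
        + ∑ t ∈ Finset.Ico k m, sval ((X i)ᵀ * Y i) t
        = ∑ t ∈ Finset.range m, sval ((X i)ᵀ * Y i) t := by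
      intro i
      simp only [Finset.range_eq_Ico]
      exact Finset.sum_Ico_consecutive _ (Nat.zero_le k) (le_of_lt hkm)
    have h4 : ∀ i, ∑ t ∈ Finset.range m, sval ((X i)ᵀ * Y i) t
        ≤ froNorm (X i) * froNorm (Y i) := fun i => kyFanSum_mul_le (X i) (Y i) m
    have h5 : ∑ i, froNorm (X i) * froNorm (Y i)
        ≤ Real.sqrt (∑ i, froNorm (X i) ^ 2) * Real.sqrt (∑ i, froNorm (Y i) ^ 2) :=
      Real.sum_mul_le_sqrt_mul_sqrt _ _ _
    calc kyFan (∑ i, (X i)ᵀ * Y i) k + ((m : ℝ) - k) * ∑ i, sval ((X i)ᵀ * Y i) m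
        ≤ (∑ i, ∑ t ∈ Finset.range k, sval ((X i)ᵀ * Y i) t)
          + ∑ i, ∑ t ∈ Finset.Ico k m, sval ((X i)ᵀ * Y i) t := by
          apply add_le_add h1
          rw [Finset.mul_sum]
          exact Finset.sum_le_sum fun i _ => h2 i
      _ = ∑ i, (∑ t ∈ Finset.range k, sval ((X i)ᵀ * Y i) t
          + ∑ t ∈ Finset.Ico k m, sval ((X i)ᵀ * Y i) t) := (Finset.sum_add_distrib).symm
      _ = ∑ i, ∑ t ∈ Finset.range m, sval ((X i)ᵀ * Y i) t :=
          Finset.sum_congr rfl fun i _ => h3 i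
      _ ≤ ∑ i, froNorm (X i) * froNorm (Y i) := Finset.sum_le_sum fun i _ => h4 i
      _ ≤ _ := h5
  -- Step D: conclude
  have hmk : (0 : ℝ) < (m : ℝ) - k := by
    have : (k : ℝ) < (m : ℝ) := Nat.cast_lt.mpr hkm
    linarith
  set D := Real.sqrt (∑ i, froNorm (X i) ^ 2) * Real.sqrt (∑ i, froNorm (Y i) ^ 2) with hD
  set K := kyFan (∑ i, (X i)ᵀ * Y i) k with hK
  have hdiv : ∑ i, sval ((X i)ᵀ * Y i) m ≤ (D - K) / ((m : ℝ) - k) := by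
    rw [le_div_iff₀ hmk]
    linarith
  calc specNorm (∑ i, ((X i)ᵀ * Y i - E i))
      ≤ (1 + ε) * ∑ i, sval ((X i)ᵀ * Y i) m := le_trans hspec hB
    _ ≤ (1 + ε) * ((D - K) / ((m : ℝ) - k)) :=
        mul_le_mul_of_nonneg_left hdiv (by linarith)
    _ = (1 + ε) / ((m : ℝ) - k) * (D - K) := by ring
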